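/- arXiv:1003.2057 — 4 statements merged into one kernel-verified Lean document; each statement's English description precedes it below -/
import Mathlib

section
/- Let u ∈ C³ near a point x₀ ∈ ℝⁿ with u_i(x₀) = 0 for 1 ≤ i ≤ n−1 and u_n(x₀) = |∇u(x₀)| > 0, and let a_{ij} (1 ≤ i,j ≤ n−1) be the curvature matrix of the level sets of u. Then at x₀, the first derivatives a_{ij,k} = ∂a_{ij}/∂x_k (1 ≤ i,j,k ≤ n−1) satisfy a_{ij,k}(x₀) = −u_n^{−1} u_{ijk} + u_n^{−2}(u_{ij} u_{kn} + u_{ik} u_{jn} + u_{jk} u_{in}); in particular a_{ij,k}(x₀) is fully symmetric in the indices i, j, k, so that a_{ij,k}(x₀) = a_{ik,j}(x₀) (a Codazzi-type formula). -/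
open scoped BigOperators RealInnerProductSpace

/-- The partial derivative `∂u/∂x_i` of `u : ℝᵈ → ℝ`. -/
noncomputable def pdv {d : ℕ} (u : EuclideanSpace ℝ (Fin d) → ℝ) (i : Fin d)
    (x : EuclideanSpace ℝ (Fin d)) : ℝ :=
  fderiv ℝ u x (EuclideanSpace.single i 1)

/-- The second partial derivative `∂²u/∂x_i∂x_j`. -/
noncomputable def pdv2 {d : ℕ} (u : EuclideanSpace ℝ (Fin d) → ℝ) (i j : Fin d)
    (x : EuclideanSpace ℝ (Fin d)) : ℝ :=
  pdv (fun y => pdv u i y) j x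

/-- A point `y` is aligned for `v` if the first `m` partial derivatives vanish and the last
partial derivative is positive (so that `∇v(y)` points in the direction of the last axis). -/
def IsAligned {m : ℕ} (v : EuclideanSpace ℝ (Fin (m + 1)) → ℝ)
    (y : EuclideanSpace ℝ (Fin (m + 1))) : Prop :=
  (∀ i : Fin m, pdv v i.castSucc y = 0) ∧ 0 < pdv v (Fin.last m) y

/-- At an aligned point the curvature matrix of the level set `{v = v(y)}` with respect to
the normal `∇v` is `a_{ij} = -v_{ij}/v_n`. -/
noncomputable def alignedCurvMatrix {m : ℕ} (v : EuclideanSpace ℝ (Fin (m + 1)) → ℝ)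
    (y : EuclideanSpace ℝ (Fin (m + 1))) : Matrix (Fin m) (Fin m) ℝ :=
  Matrix.of fun i j => -(pdv2 v i.castSucc j.castSucc y) / pdv v (Fin.last m) y

/-- The level sets of `u` are strictly convex w.r.t. the normal `∇u` on `S` : in any rotated
coordinate system aligned at `x`, the curvature matrix of the level set is positive definite. -/
def HasStrictlyConvexLevelSets {m : ℕ} (u : EuclideanSpace ℝ (Fin (m + 1)) → ℝ)
    (S : Set (EuclideanSpace ℝ (Fin (m + 1)))) : Prop :=
  ∀ x ∈ S, ∀ Q : EuclideanSpace ℝ (Fin (m + 1)) ≃ₗᵢ[ℝ] EuclideanSpace ℝ (Fin (m + 1)),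
    IsAligned (u ∘ Q) (Q.symm x) → (alignedCurvMatrix (u ∘ Q) (Q.symm x)).PosDef

/-- `K` is the Gaussian curvature of the level sets of `u` (w.r.t. the normal `∇u`) on `S`:
in any rotated coordinate system aligned at `x`, `K x` is the determinant of the curvature
matrix of the level set of `u` through `x`. -/
def IsGaussCurvatureOfLevelSets {m : ℕ} (u : EuclideanSpace ℝ (Fin (m + 1)) → ℝ)
    (K : EuclideanSpace ℝ (Fin (m + 1)) → ℝ)
    (S : Set (EuclideanSpace ℝ (Fin (m + 1)))) : Prop :=
  ∀ x ∈ S, ∀ Q : EuclideanSpace ℝ (Fin (m + 1)) ≃ₗᵢ[ℝ] EuclideanSpace ℝ (Fin (m + 1)),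
    IsAligned (u ∘ Q) (Q.symm x) → K x = (alignedCurvMatrix (u ∘ Q) (Q.symm x)).det

/-- `u` satisfies the minimal surface equation `div(∇u/√(1+|∇u|²)) = 0` on `S`. -/
def SatisfiesMinimalSurfaceEq {d : ℕ} (u : EuclideanSpace ℝ (Fin d) → ℝ)
    (S : Set (EuclideanSpace ℝ (Fin d))) : Prop :=
  ∀ x ∈ S, ∑ α : Fin d, pdv (fun y => pdv u α y / Real.sqrt (1 + ‖gradient u y‖ ^ 2)) α x = 0

/-- `h_{ij} = u_n² u_{ij} + u_{nn} u_i u_j - u_n u_j u_{in} - u_n u_i u_{jn}`. -/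
noncomputable def hMat {m : ℕ} (u : EuclideanSpace ℝ (Fin (m + 1)) → ℝ) (i j : Fin m)
    (y : EuclideanSpace ℝ (Fin (m + 1))) : ℝ :=
  (pdv u (Fin.last m) y) ^ 2 * pdv2 u i.castSucc j.castSucc y
    + pdv2 u (Fin.last m) (Fin.last m) y * pdv u i.castSucc y * pdv u j.castSucc y
    - pdv u (Fin.last m) y * pdv u j.castSucc y * pdv2 u i.castSucc (Fin.last m) y
    - pdv u (Fin.last m) y * pdv u i.castSucc y * pdv2 u j.castSucc (Fin.last m) y

/-- `W = |∇u| / |u_n|`. -/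
noncomputable def Wfun {m : ℕ} (u : EuclideanSpace ℝ (Fin (m + 1)) → ℝ)
    (y : EuclideanSpace ℝ (Fin (m + 1))) : ℝ :=
  ‖gradient u y‖ / |pdv u (Fin.last m) y|

/-- The curvature matrix `a_{ij}` of the level sets of `u`, defined wherever `u_n ≠ 0`:
`a_{ij} = (|∇u| u_n²)⁻¹ [ -h_{ij} + (u_i u_l h_{jl} + u_j u_l h_{il})/(W(1+W)u_n²)
  - u_i u_j u_k u_l h_{kl}/(W²(1+W)² u_n⁴) ]`. -/
noncomputable def curvMat {m : ℕ} (u : EuclideanSpace ℝ (Fin (m + 1)) → ℝ) (i j : Fin m)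
    (y : EuclideanSpace ℝ (Fin (m + 1))) : ℝ :=
  (‖gradient u y‖ * (pdv u (Fin.last m) y) ^ 2)⁻¹ *
    (-hMat u i j y
      + (∑ l : Fin m, (pdv u i.castSucc y * pdv u l.castSucc y * hMat u j l y
          + pdv u j.castSucc y * pdv u l.castSucc y * hMat u i l y)) /
        (Wfun u y * (1 + Wfun u y) * (pdv u (Fin.last m) y) ^ 2)
      - (∑ k : Fin m, ∑ l : Fin m,
          pdv u i.castSucc y * pdv u j.castSucc y * pdv u k.castSucc y * pdv u l.castSucc y *
            hMat u k l y) /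
        ((Wfun u y) ^ 2 * (1 + Wfun u y) ^ 2 * (pdv u (Fin.last m) y) ^ 4))

section Helpers

variable {E : Type*} [NormedAddCommGroup E] [NormedSpace ℝ E]
  {f g : E → ℝ} {f' g' : E →L[ℝ] ℝ} {x : E}

lemma hfd_inv (hf : HasFDerivAt f f' x) (hx : f x ≠ 0) :
    HasFDerivAt (fun y => (f y)⁻¹) ((-((f x) ^ 2)⁻¹) • f') x := by
  exact (hasDerivAt_inv hx).comp_hasFDerivAt x hf

lemma hfd_div (hf : HasFDerivAt f f' x) (hg : HasFDerivAt g g' x) (hx : g x ≠ 0) :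
    HasFDerivAt (fun y => f y / g y)
      (f x • ((-((g x) ^ 2)⁻¹) • g') + (g x)⁻¹ • f') x := by
  have h := hf.fun_mul (hfd_inv hg hx)
  have heq : (fun y => f y * (g y)⁻¹) = fun y => f y / g y := by
    funext y; rw [div_eq_mul_inv]
  rwa [heq] at h

lemma hfd_pow (n : ℕ) (hf : HasFDerivAt f f' x) :
    HasFDerivAt (fun y => f y ^ n) (((n : ℝ) * f x ^ (n - 1)) • f') x := by
  simpa [Function.comp_def] using (hasDerivAt_pow n (f x)).comp_hasFDerivAt x hf

lemma pdv_contDiffAt {d : ℕ} {u : EuclideanSpace ℝ (Fin d) → ℝ}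
    {x : EuclideanSpace ℝ (Fin d)} {n : WithTop ℕ∞}
    (hu : ContDiffAt ℝ (n + 1) u x) (α : Fin d) :
    ContDiffAt ℝ n (fun y => pdv u α y) x := by
  have h1 : ContDiffAt ℝ n (fderiv ℝ u) x := hu.fderiv_right le_rfl
  exact h1.clm_apply contDiffAt_const

lemma pdv2_symm {d : ℕ} {f : EuclideanSpace ℝ (Fin d) → ℝ}
    {x : EuclideanSpace ℝ (Fin d)} (hf : ContDiffAt ℝ 2 f x) (α β : Fin d) :
    pdv2 f α β x = pdv2 f β α x := by
  have hsymm := hf.isSymmSndFDerivAt (by simp [minSmoothness_of_isRCLikeNormedField])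
  have hd : DifferentiableAt ℝ (fderiv ℝ f) x := by
    have : ContDiffAt ℝ 1 (fderiv ℝ f) x := hf.fderiv_right (by norm_num)
    exact this.differentiableAt (by norm_num)
  have key : ∀ γ δ : Fin d, pdv2 f γ δ x =
      fderiv ℝ (fderiv ℝ f) x (EuclideanSpace.single δ 1) (EuclideanSpace.single γ 1) := by
    intro γ δ
    show fderiv ℝ (fun y => fderiv ℝ f y (EuclideanSpace.single γ 1)) x
        (EuclideanSpace.single δ 1) = _
    rw [fderiv_clm_apply hd (differentiableAt_const _)]
    simp
  rw [key, key, hsymm.eq]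

lemma norm_gradient_eq {d : ℕ} (u : EuclideanSpace ℝ (Fin d) → ℝ) :
    (fun y => ‖gradient u y‖) =
      fun y => Real.sqrt (∑ α : Fin d, pdv u α y * pdv u α y) := by
  funext y
  rw [EuclideanSpace.norm_eq]
  congr 1
  refine Finset.sum_congr rfl fun α _ => ?_
  have h1 : gradient u y α = pdv u α y := by
    have h2 : (inner ℝ (gradient u y) (EuclideanSpace.single α (1:ℝ)) : ℝ) = pdv u α y := by
      rw [gradient]
      exact InnerProductSpace.toDual_symm_apply
    rw [← h2, EuclideanSpace.inner_single_right]
    simp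
  rw [h1, Real.norm_eq_abs, sq_abs, sq]

end Helpers

/-- **Codazzi-type formula.** If `u` is `C³` near `x₀` with `u_i(x₀) = 0` for `i < n` and
`u_n(x₀) = |∇u(x₀)| > 0`, then at `x₀` the derivatives `a_{ij,k}` of the curvature matrix of
the level sets satisfy
`a_{ij,k} = -u_n⁻¹ u_{ijk} + u_n⁻² (u_{ij} u_{kn} + u_{ik} u_{jn} + u_{jk} u_{in})`;
in particular `a_{ij,k}` is fully symmetric in `i, j, k`, so `a_{ij,k} = a_{ik,j}`. -/
theorem codazzi_formula_curvature_matrix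
    (m : ℕ) (u : EuclideanSpace ℝ (Fin (m + 1)) → ℝ)
    (x₀ : EuclideanSpace ℝ (Fin (m + 1)))
    (hu : ContDiffAt ℝ 3 u x₀)
    (hali : ∀ i : Fin m, pdv u i.castSucc x₀ = 0)
    (hn : pdv u (Fin.last m) x₀ = ‖gradient u x₀‖)
    (hpos : 0 < pdv u (Fin.last m) x₀) :
    ∀ i j k : Fin m,
      pdv (fun y => curvMat u i j y) k.castSucc x₀ =
        -(pdv u (Fin.last m) x₀)⁻¹ *
            pdv (fun y => pdv2 u i.castSucc j.castSucc y) k.castSucc x₀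
          + ((pdv u (Fin.last m) x₀) ^ 2)⁻¹ *
            (pdv2 u i.castSucc j.castSucc x₀ * pdv2 u k.castSucc (Fin.last m) x₀
              + pdv2 u i.castSucc k.castSucc x₀ * pdv2 u j.castSucc (Fin.last m) x₀
              + pdv2 u j.castSucc k.castSucc x₀ * pdv2 u i.castSucc (Fin.last m) x₀) ∧
      pdv (fun y => curvMat u i j y) k.castSucc x₀ =
        pdv (fun y => curvMat u i k y) j.castSucc x₀ := by
  have hc0 : pdv u (Fin.last m) x₀ ≠ 0 := ne_of_gt hpos
  have hu2 : ContDiffAt ℝ 2 u x₀ := hu.of_le (by norm_num)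
  have hp : ∀ α, ContDiffAt ℝ 2 (fun y => pdv u α y) x₀ := by
    intro α
    exact pdv_contDiffAt (n := 2) (hu.of_le (by norm_num)) α
  have hq : ∀ α β, ContDiffAt ℝ 1 (fun y => pdv2 u α β y) x₀ := by
    intro α β
    exact pdv_contDiffAt (n := 1) ((hp α).of_le (by norm_num)) β
  have hP : ∀ α, HasFDerivAt (fun y => pdv u α y)
      (fderiv ℝ (fun y => pdv u α y) x₀) x₀ :=
    fun α => ((hp α).differentiableAt (by norm_num)).hasFDerivAt
  have hQ : ∀ α β, HasFDerivAt (fun y => pdv2 u α β y)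
      (fderiv ℝ (fun y => pdv2 u α β y) x₀) x₀ :=
    fun α β => ((hq α β).differentiableAt (by norm_num)).hasFDerivAt
  have hPe : ∀ α κ : Fin (m + 1),
      fderiv ℝ (fun y => pdv u α y) x₀ (EuclideanSpace.single κ 1) = pdv2 u α κ x₀ :=
    fun _ _ => rfl
  have hQe : ∀ α β κ : Fin (m + 1),
      fderiv ℝ (fun y => pdv2 u α β y) x₀ (EuclideanSpace.single κ 1) =
        pdv (fun y => pdv2 u α β y) κ x₀ :=
    fun _ _ _ => rfl
  -- the sum of squares
  have hS' := fun (α : Fin (m + 1)) => (hP α).fun_mul (hP α)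
  have hS := HasFDerivAt.fun_sum (u := (Finset.univ : Finset (Fin (m + 1)))) (fun α _ => hS' α)
  have hSx : (∑ α : Fin (m + 1), pdv u α x₀ * pdv u α x₀) = pdv u (Fin.last m) x₀ ^ 2 := by
    rw [Fin.sum_univ_castSucc]
    simp [hali, sq]
  have hSne : (∑ α : Fin (m + 1), pdv u α x₀ * pdv u α x₀) ≠ 0 := by
    rw [hSx]; exact pow_ne_zero 2 hc0
  have hN := (norm_gradient_eq u).symm ▸ (hS.sqrt hSne)
  -- W
  have hevpos : ∀ᶠ y in nhds x₀, 0 < pdv u (Fin.last m) y :=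
    (hp (Fin.last m)).continuousAt.eventually (eventually_gt_nhds hpos)
  have hWev : Wfun u =ᶠ[nhds x₀] fun y => ‖gradient u y‖ / pdv u (Fin.last m) y := by
    filter_upwards [hevpos] with y hy
    show ‖gradient u y‖ / |pdv u (Fin.last m) y| = _
    rw [abs_of_pos hy]
  have hW := (hfd_div hN (hP (Fin.last m)) hc0).congr_of_eventuallyEq hWev
  have hWx : Wfun u x₀ = 1 := by
    show ‖gradient u x₀‖ / |pdv u (Fin.last m) x₀| = 1
    rw [← hn, abs_of_pos hpos, div_self hc0]
  -- hMat
  have hH := fun (a b : Fin m) =>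
    ((((hfd_pow 2 (hP (Fin.last m))).fun_mul (hQ a.castSucc b.castSucc)).fun_add
      (((hQ (Fin.last m) (Fin.last m)).fun_mul (hP a.castSucc)).fun_mul (hP b.castSucc))).fun_sub
      (((hP (Fin.last m)).fun_mul (hP b.castSucc)).fun_mul (hQ a.castSucc (Fin.last m)))).fun_sub
      (((hP (Fin.last m)).fun_mul (hP a.castSucc)).fun_mul (hQ b.castSucc (Fin.last m)))
  have main : ∀ i j k : Fin m,
      pdv (fun y => curvMat u i j y) k.castSucc x₀ =
        -(pdv u (Fin.last m) x₀)⁻¹ *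
            pdv (fun y => pdv2 u i.castSucc j.castSucc y) k.castSucc x₀
          + ((pdv u (Fin.last m) x₀) ^ 2)⁻¹ *
            (pdv2 u i.castSucc j.castSucc x₀ * pdv2 u k.castSucc (Fin.last m) x₀
              + pdv2 u i.castSucc k.castSucc x₀ * pdv2 u j.castSucc (Fin.last m) x₀
              + pdv2 u j.castSucc k.castSucc x₀ * pdv2 u i.castSucc (Fin.last m) x₀) := by
    intro i j k
    have hHx : ∀ a b : Fin m, hMat u a b x₀ =
        pdv u (Fin.last m) x₀ ^ 2 * pdv2 u a.castSucc b.castSucc x₀ := by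
      intro a b
      show pdv u (Fin.last m) x₀ ^ 2 * pdv2 u a.castSucc b.castSucc x₀ + _ - _ - _ = _
      rw [hali, hali]; ring
    have hT2' := fun (l : Fin m) => (((hP i.castSucc).fun_mul (hP l.castSucc)).fun_mul (hH j l)).fun_add
        (((hP j.castSucc).fun_mul (hP l.castSucc)).fun_mul (hH i l))
    have hT2 := HasFDerivAt.fun_sum (u := (Finset.univ : Finset (Fin m))) (fun l _ => hT2' l)
    have hD2 := (hW.fun_mul (hW.const_add 1)).fun_mul (hfd_pow 2 (hP (Fin.last m)))
    have hD2ne : Wfun u x₀ * (1 + Wfun u x₀) * pdv u (Fin.last m) x₀ ^ 2 ≠ 0 := by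
      rw [hWx]
      have := pow_ne_zero 2 hc0
      norm_num [this]
    have hfrac2 := hfd_div hT2 hD2 hD2ne
    have hT3' := fun (k' l : Fin m) => ((((hP i.castSucc).fun_mul (hP j.castSucc)).fun_mul
        (hP k'.castSucc)).fun_mul (hP l.castSucc)).fun_mul (hH k' l)
    have hT3'' := fun (k' : Fin m) =>
      HasFDerivAt.fun_sum (u := (Finset.univ : Finset (Fin m))) (fun l _ => hT3' k' l)
    have hT3 := HasFDerivAt.fun_sum (u := (Finset.univ : Finset (Fin m))) (fun k' _ => hT3'' k')
    have hD3 := ((hfd_pow 2 hW).fun_mul (hfd_pow 2 (hW.const_add 1))).fun_mul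
      (hfd_pow 4 (hP (Fin.last m)))
    have hD3ne : Wfun u x₀ ^ 2 * (1 + Wfun u x₀) ^ 2 * pdv u (Fin.last m) x₀ ^ 4 ≠ 0 := by
      rw [hWx]
      have := pow_ne_zero 4 hc0
      norm_num [this]
    have hfrac3 := hfd_div hT3 hD3 hD3ne
    have hB := (((hH i j).fun_neg.fun_add hfrac2).fun_sub hfrac3)
    have hAne : ‖gradient u x₀‖ * pdv u (Fin.last m) x₀ ^ 2 ≠ 0 := by
      rw [← hn]; exact mul_ne_zero hc0 (pow_ne_zero 2 hc0)
    have hA := hfd_inv (hN.fun_mul (hfd_pow 2 (hP (Fin.last m)))) hAne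
    have hcurv : HasFDerivAt (𝕜 := ℝ) (fun y => curvMat u i j y) _ x₀ := hA.fun_mul hB
    have key := DFunLike.congr_fun hcurv.fderiv (EuclideanSpace.single k.castSucc 1)
    have hsym1 : pdv2 u (Fin.last m) k.castSucc x₀ = pdv2 u k.castSucc (Fin.last m) x₀ :=
      pdv2_symm hu2 _ _
    rw [show pdv (fun y => curvMat u i j y) k.castSucc x₀ =
      fderiv ℝ (fun y => curvMat u i j y) x₀ (EuclideanSpace.single k.castSucc 1) from rfl, key]
    simp only [ContinuousLinearMap.add_apply, ContinuousLinearMap.sub_apply,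
      ContinuousLinearMap.neg_apply, ContinuousLinearMap.smul_apply,
      ContinuousLinearMap.coe_sum', Finset.sum_apply, smul_eq_mul, hPe, hQe, hali,
      hWx, hSx, hHx, ← hn, Real.sqrt_sq hpos.le, Fin.sum_univ_castSucc,
      mul_zero, zero_mul, add_zero, zero_add, neg_zero, Finset.sum_const_zero]
    rw [hsym1]
    field_simp
    ring
  intro i j k
  refine ⟨main i j k, ?_⟩
  have hsym2 : pdv2 u j.castSucc k.castSucc x₀ = pdv2 u k.castSucc j.castSucc x₀ :=
    pdv2_symm hu2 _ _
  have hT : pdv (fun y => pdv2 u i.castSucc j.castSucc y) k.castSucc x₀ =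
      pdv (fun y => pdv2 u i.castSucc k.castSucc y) j.castSucc x₀ :=
    pdv2_symm (hp i.castSucc) j.castSucc k.castSucc
  rw [main i j k, main i k j, hT, hsym2]
  ring
end

section
/- Let I be a nonempty finite index set, let λ ≥ 0 and μ ∈ ℝ, and for each i ∈ I let b_i > 0 and c_i ∈ ℝ. Define the quadratic polynomial Q(X) = −Σ_{i∈I} b_i X_i² − λ (Σ_{i∈I} X_i)² + 4μ Σ_{i∈I} c_i X_i for X = (X_i)_{i∈I} ∈ ℝ^I. Then for all X ∈ ℝ^I, Q(X) ≤ 4μ² Γ, where Γ = Σ_{i∈I} c_i²/b_i − λ (1 + λ Σ_{i∈I} 1/b_i)^{-1} (Σ_{i∈I} c_i/b_i)². -/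
open scoped BigOperators

/-- **Elementary calculus lemma.** For a nonempty finite index set, `λ ≥ 0`, `μ ∈ ℝ`,
`b_i > 0`, `c_i ∈ ℝ`, the quadratic
`Q(X) = -∑ b_i X_i² - λ (∑ X_i)² + 4μ ∑ c_i X_i` satisfies `Q(X) ≤ 4μ²Γ` with
`Γ = ∑ c_i²/b_i - λ (1 + λ ∑ 1/b_i)⁻¹ (∑ c_i/b_i)²`. -/
theorem quadratic_max_lemma
    {ι : Type*} [Fintype ι] [Nonempty ι]
    (lam mu : ℝ) (hlam : 0 ≤ lam)
    (b c : ι → ℝ) (hb : ∀ i, 0 < b i)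
    (X : ι → ℝ) :
    -(∑ i, b i * X i ^ 2) - lam * (∑ i, X i) ^ 2 + 4 * mu * ∑ i, c i * X i ≤
      4 * mu ^ 2 *
        ((∑ i, c i ^ 2 / b i) -
          lam * (1 + lam * ∑ i, 1 / b i)⁻¹ * (∑ i, c i / b i) ^ 2) := by
  set A := ∑ i, 1 / b i with hA
  set B := ∑ i, c i / b i with hB
  set C := ∑ i, c i ^ 2 / b i with hC
  set E := ∑ i, b i * X i ^ 2 with hE
  set P := ∑ i, c i * X i with hP
  set S := ∑ i, X i with hS
  have hApos : 0 < A := Finset.sum_pos (fun i _ => one_div_pos.mpr (hb i)) Finset.univ_nonempty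
  have hD : 0 < 1 + lam * A := by nlinarith [mul_nonneg hlam hApos.le]
  set Sst := 2 * mu * B / (1 + lam * A) with hSstdef
  have hSstD : Sst * (1 + lam * A) = 2 * mu * B := div_mul_cancel₀ _ hD.ne'
  have expand : ∀ i, b i * (X i - (2 * mu * c i - lam * Sst) / b i) ^ 2
      = b i * X i ^ 2 - 4 * mu * (c i * X i) + 2 * lam * Sst * X i
        + 4 * mu ^ 2 * (c i ^ 2 / b i) - 4 * mu * lam * Sst * (c i / b i)
        + lam ^ 2 * Sst ^ 2 * (1 / b i) := by
    intro i
    have hbi : b i ≠ 0 := (hb i).ne'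
    field_simp
    ring
  have h1 : 0 ≤ E - 4 * mu * P + 2 * lam * Sst * S + 4 * mu ^ 2 * C
      - 4 * mu * lam * Sst * B + lam ^ 2 * Sst ^ 2 * A := by
    have h0 : (0:ℝ) ≤ ∑ i, b i * (X i - (2 * mu * c i - lam * Sst) / b i) ^ 2 :=
      Finset.sum_nonneg fun i _ => mul_nonneg (hb i).le (sq_nonneg _)
    calc (0:ℝ) ≤ _ := h0
      _ = _ := by
        rw [Finset.sum_congr rfl fun i _ => expand i]
        simp only [Finset.sum_add_distrib, Finset.sum_sub_distrib, ← Finset.mul_sum]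
        rfl
  have h2 : 0 ≤ lam * S ^ 2 - 2 * lam * S * Sst + lam * Sst ^ 2 := by
    nlinarith [mul_nonneg hlam (sq_nonneg (S - Sst))]
  have hSD : lam * Sst ^ 2 * (1 + lam * A) = 2 * mu * lam * Sst * B := by
    rw [show lam * Sst ^ 2 * (1 + lam * A) = lam * Sst * (Sst * (1 + lam * A)) by ring,
      hSstD]
    ring
  have hRHS : 4 * mu ^ 2 * (C - lam * (1 + lam * A)⁻¹ * B ^ 2)
      = 4 * mu ^ 2 * C - 2 * mu * lam * Sst * B := by
    rw [hSstdef]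
    field_simp
    ring
  rw [hRHS]
  nlinarith [h1, h2, hSD]
end

section
/- Let n ≥ 3 be an integer and θ ∈ ℝ. For t > 0 and s ≥ 1, define q₁(θ,t) = 2θ − n + 3 + (1−n)t, q₂(θ,t) = −(4/(n−1))θ² + (2 − 8/(n−1))θ + 2 − 4/(n−1) − 2θt, and q₃(θ,t,s) = −(4/(n−1))θ² + (4 − 8/(n−1))θ + 5 − n − 4/(n−1) + (−2θ − n + 3 − 2s)t. If θ = −1/2 or θ ≥ (n−3)/2, then for all t > 0 and all s ≥ 1: q₁(θ,t) + q₂(θ,t) ≤ 0, q₁(θ,t) + (n−1) q₂(θ,t) ≤ 0, and q₃(θ,t,s) ≤ 0. -/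
/-- **Algebraic inequalities in the minimal-graph curvature estimate.** For `n ≥ 3`,
`θ = -1/2` or `θ ≥ (n-3)/2`, all `t > 0` and `s ≥ 1`:
`q₁(θ,t) + q₂(θ,t) ≤ 0`, `q₁(θ,t) + (n-1) q₂(θ,t) ≤ 0`, and `q₃(θ,t,s) ≤ 0`, where
`q₁(θ,t) = 2θ - n + 3 + (1-n)t`,
`q₂(θ,t) = -(4/(n-1))θ² + (2 - 8/(n-1))θ + 2 - 4/(n-1) - 2θt`,
`q₃(θ,t,s) = -(4/(n-1))θ² + (4 - 8/(n-1))θ + 5 - n - 4/(n-1) + (-2θ - n + 3 - 2s)t`. -/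
theorem minimal_graph_sufficient_inequalities
    (n : ℕ) (hn : 3 ≤ n) (θ : ℝ)
    (hθ : θ = -(1 / 2) ∨ ((n : ℝ) - 3) / 2 ≤ θ) :
    ∀ t : ℝ, 0 < t → ∀ s : ℝ, 1 ≤ s →
      (2 * θ - (n : ℝ) + 3 + (1 - (n : ℝ)) * t) +
        (-(4 / ((n : ℝ) - 1)) * θ ^ 2 + (2 - 8 / ((n : ℝ) - 1)) * θ + 2 - 4 / ((n : ℝ) - 1)
          - 2 * θ * t) ≤ 0 ∧
      (2 * θ - (n : ℝ) + 3 + (1 - (n : ℝ)) * t) +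
        ((n : ℝ) - 1) *
          (-(4 / ((n : ℝ) - 1)) * θ ^ 2 + (2 - 8 / ((n : ℝ) - 1)) * θ + 2 - 4 / ((n : ℝ) - 1)
            - 2 * θ * t) ≤ 0 ∧
      -(4 / ((n : ℝ) - 1)) * θ ^ 2 + (4 - 8 / ((n : ℝ) - 1)) * θ + 5 - (n : ℝ)
          - 4 / ((n : ℝ) - 1) + (-(2 * θ) - (n : ℝ) + 3 - 2 * s) * t ≤ 0 := by
  intro t ht s hs
  have hN : (3 : ℝ) ≤ (n : ℝ) := by exact_mod_cast hn
  have hm : (0 : ℝ) < (n : ℝ) - 1 := by linarith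
  have hm' : ((n : ℝ) - 1) ≠ 0 := ne_of_gt hm
  have hθ' : -(1 / 2 : ℝ) ≤ θ := by
    rcases hθ with h | h
    · exact h.ge
    · linarith
  refine ⟨?_, ?_, ?_⟩
  · have key : ((2 * θ - (n : ℝ) + 3 + (1 - (n : ℝ)) * t) +
        (-(4 / ((n : ℝ) - 1)) * θ ^ 2 + (2 - 8 / ((n : ℝ) - 1)) * θ + 2 - 4 / ((n : ℝ) - 1)
          - 2 * θ * t)) * ((n : ℝ) - 1) ≤ 0 := by
      have e : ((2 * θ - (n : ℝ) + 3 + (1 - (n : ℝ)) * t) +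
          (-(4 / ((n : ℝ) - 1)) * θ ^ 2 + (2 - 8 / ((n : ℝ) - 1)) * θ + 2 - 4 / ((n : ℝ) - 1)
            - 2 * θ * t)) * ((n : ℝ) - 1)
          = -(2 * θ - ((n : ℝ) - 3)) ^ 2 - (2 * θ + (n : ℝ) - 1) * (((n : ℝ) - 1) * t) := by
        field_simp
        ring
      rw [e]
      have h1 : 0 ≤ (2 * θ + (n : ℝ) - 1) * (((n : ℝ) - 1) * t) :=
        mul_nonneg (by linarith) (by positivity)
      nlinarith [sq_nonneg (2 * θ - ((n : ℝ) - 3))]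
    nlinarith [key, hm]
  · have e : (2 * θ - (n : ℝ) + 3 + (1 - (n : ℝ)) * t) +
        ((n : ℝ) - 1) *
          (-(4 / ((n : ℝ) - 1)) * θ ^ 2 + (2 - 8 / ((n : ℝ) - 1)) * θ + 2 - 4 / ((n : ℝ) - 1)
            - 2 * θ * t)
        = -((2 * θ - ((n : ℝ) - 3)) * (2 * θ + 1)) - ((n : ℝ) - 1) * (1 + 2 * θ) * t := by
      field_simp
      ring
    rw [e]
    rcases hθ with h | h
    · subst h; norm_num
    · have h1 : 0 ≤ 2 * θ - ((n : ℝ) - 3) := by linarith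
      have h2 : (0 : ℝ) ≤ 2 * θ + 1 := by linarith
      nlinarith [mul_nonneg h1 h2, mul_nonneg (mul_nonneg hm.le (by linarith : (0:ℝ) ≤ 1 + 2 * θ)) ht.le]
  · have key : (-(4 / ((n : ℝ) - 1)) * θ ^ 2 + (4 - 8 / ((n : ℝ) - 1)) * θ + 5 - (n : ℝ)
          - 4 / ((n : ℝ) - 1) + (-(2 * θ) - (n : ℝ) + 3 - 2 * s) * t) * ((n : ℝ) - 1) ≤ 0 := by
      have e : (-(4 / ((n : ℝ) - 1)) * θ ^ 2 + (4 - 8 / ((n : ℝ) - 1)) * θ + 5 - (n : ℝ)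
            - 4 / ((n : ℝ) - 1) + (-(2 * θ) - (n : ℝ) + 3 - 2 * s) * t) * ((n : ℝ) - 1)
          = -(2 * θ - ((n : ℝ) - 3)) ^ 2 - (2 * θ + (n : ℝ) - 3 + 2 * s) * (((n : ℝ) - 1) * t) := by
        field_simp
        ring
      rw [e]
      have h1 : 0 ≤ (2 * θ + (n : ℝ) - 3 + 2 * s) * (((n : ℝ) - 1) * t) :=
        mul_nonneg (by linarith) (by positivity)
      nlinarith [sq_nonneg (2 * θ - ((n : ℝ) - 3))]
    nlinarith [key, hm]
end

section
/- Let Ω ⊂ ℝⁿ be a convex open set and let f ∈ C²(Ω) with f(x) > 0 for all x ∈ Ω. Then the function (x,t) ↦ t³ f(x) is convex on Ω × (0, +∞) if and only if the function x ↦ f(x)^(−1/2) is concave on Ω. -/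
lemma key_ineq (a b t1 t2 s1 s2 : ℝ) (ha : 0 ≤ a) (hb : 0 ≤ b) (hab : a + b = 1)
    (ht1 : 0 ≤ t1) (ht2 : 0 ≤ t2) (hs1 : 0 < s1) (hs2 : 0 < s2) :
    (a*t1+b*t2)^3 / (a*s1+b*s2)^2 ≤ a*(t1^3/s1^2) + b*(t2^3/s2^2) := by
  obtain rfl : b = 1 - a := by linarith
  have hS : 0 < a*s1+(1-a)*s2 := by
    have h1 : a * min s1 s2 ≤ a * s1 := mul_le_mul_of_nonneg_left (min_le_left _ _) ha
    have h2 : (1-a) * min s1 s2 ≤ (1-a) * s2 := mul_le_mul_of_nonneg_left (min_le_right _ _) hb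
    have h3 : 0 < min s1 s2 := lt_min hs1 hs2
    nlinarith
  set T := a*t1+(1-a)*t2 with hT
  set S := a*s1+(1-a)*s2 with hSdef
  have hTn : 0 ≤ T := by positivity
  have hkey : ((a*t1^3*s2^2 + (1-a)*t2^3*s1^2) * S^2 - T^3 * (s1^2*s2^2)) * S
      = a*s2^2*(t1*S - T*s1)^2*(t1*S + 2*T*s1)
        + (1-a)*s1^2*(t2*S - T*s2)^2*(t2*S + 2*T*s2) := by
    simp only [hT, hSdef]; ring
  have h1 : 0 ≤ a*s2^2*(t1*S - T*s1)^2*(t1*S + 2*T*s1) := by positivity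
  have h2 : 0 ≤ (1-a)*s1^2*(t2*S - T*s2)^2*(t2*S + 2*T*s2) := by positivity
  have hD : 0 ≤ (a*t1^3*s2^2 + (1-a)*t2^3*s1^2) * S^2 - T^3 * (s1^2*s2^2) := by
    nlinarith [hkey, h1, h2, hS]
  have hfin : a*(t1^3/s1^2)+(1-a)*(t2^3/s2^2) - T^3/S^2
      = ((a*t1^3*s2^2 + (1-a)*t2^3*s1^2) * S^2 - T^3 * (s1^2*s2^2)) / (s1^2*s2^2*S^2) := by
    field_simp
  have := div_nonneg hD (by positivity : (0:ℝ) ≤ s1^2*s2^2*S^2)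
  linarith [hfin ▸ this]

lemma convpos (a b u v : ℝ) (ha : 0 ≤ a) (hb : 0 ≤ b) (hab : a + b = 1)
    (hu : 0 < u) (hv : 0 < v) : 0 < a*u + b*v := by
  have h1 : a * min u v ≤ a * u := mul_le_mul_of_nonneg_left (min_le_left _ _) ha
  have h2 : b * min u v ≤ b * v := mul_le_mul_of_nonneg_left (min_le_right _ _) hb
  have h3 : 0 < min u v := lt_min hu hv
  nlinarith

/-- **Convexity criterion.** For a convex open `Ω ⊂ ℝⁿ` and a positive `C²` function `f` on
`Ω`, the function `(x, t) ↦ t³ f(x)` is convex on `Ω × (0, ∞)` if and only if `f^(-1/2)` is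
concave on `Ω`. -/
theorem cube_convex_iff_inv_sqrt_concave
    (n : ℕ) (Ω : Set (EuclideanSpace ℝ (Fin n)))
    (hΩconv : Convex ℝ Ω) (hΩopen : IsOpen Ω)
    (f : EuclideanSpace ℝ (Fin n) → ℝ)
    (hf : ContDiffOn ℝ 2 f Ω) (hfpos : ∀ x ∈ Ω, 0 < f x) :
    ConvexOn ℝ (Ω ×ˢ Set.Ioi (0 : ℝ))
        (fun p : EuclideanSpace ℝ (Fin n) × ℝ => p.2 ^ 3 * f p.1) ↔
      ConcaveOn ℝ Ω (fun x => f x ^ (-(1 / 2) : ℝ)) := by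
  set h : EuclideanSpace ℝ (Fin n) → ℝ := fun x => f x ^ (-(1 / 2) : ℝ) with hh
  have hpos : ∀ x ∈ Ω, 0 < h x := fun x hx => Real.rpow_pos_of_pos (hfpos x hx) _
  have hsq : ∀ x ∈ Ω, h x ^ 2 = (f x)⁻¹ := by
    intro x hx
    rw [hh]
    rw [← Real.rpow_natCast (f x ^ (-(1/2) : ℝ)) 2, ← Real.rpow_mul (hfpos x hx).le]
    norm_num [Real.rpow_neg_one]
  constructor
  · intro H
    refine ⟨hΩconv, ?_⟩
    intro x hx y hy a b ha hb hab
    have hzx := hpos x hx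
    have hzy := hpos y hy
    have hmem1 : ((x, h x) : EuclideanSpace ℝ (Fin n) × ℝ) ∈ Ω ×ˢ Set.Ioi (0:ℝ) :=
      Set.mem_prod.2 ⟨hx, hzx⟩
    have hmem2 : ((y, h y) : EuclideanSpace ℝ (Fin n) × ℝ) ∈ Ω ×ˢ Set.Ioi (0:ℝ) :=
      Set.mem_prod.2 ⟨hy, hzy⟩
    have hzmem : a • x + b • y ∈ Ω := hΩconv hx hy ha hb hab
    have hzpos := hfpos _ hzmem
    have hzsq := hsq _ hzmem
    have hzh := hpos _ hzmem
    have ht : 0 < a * h x + b * h y := convpos a b _ _ ha hb hab hzx hzy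
    have key := H.2 hmem1 hmem2 ha hb hab
    simp only [Prod.smul_mk, Prod.mk_add_mk, smul_eq_mul] at key
    have e1 : (h x) ^ 3 * f x = h x := by
      have : h x ^ 2 * f x = 1 := by
        rw [hsq x hx]; field_simp [(hfpos x hx).ne']
      nlinarith [this]
    have e2 : (h y) ^ 3 * f y = h y := by
      have : h y ^ 2 * f y = 1 := by
        rw [hsq y hy]; field_simp [(hfpos y hy).ne']
      nlinarith [this]
    rw [e1, e2] at key
    -- key : (a * h x + b * h y)^3 * f (a•x+b•y) ≤ a * h x + b * h y
    have hz2 : f (a • x + b • y) * h (a • x + b • y) ^ 2 = 1 := by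
      rw [hzsq]; field_simp [hzpos.ne']
    have goal' : a * h x + b * h y ≤ h (a • x + b • y) := by
      nlinarith [key, hz2, ht, hzh, hzpos, mul_pos ht hzh,
        mul_pos (mul_pos hzpos ht) (add_pos ht hzh)]
    simpa [smul_eq_mul] using goal'
  · intro H
    refine ⟨hΩconv.prod (convex_Ioi 0), ?_⟩
    rintro ⟨x, t1⟩ hp ⟨y, t2⟩ hq a b ha hb hab
    obtain ⟨hx, ht1⟩ := Set.mem_prod.1 hp
    obtain ⟨hy, ht2⟩ := Set.mem_prod.1 hq
    have ht1 : (0:ℝ) < t1 := ht1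
    have ht2 : (0:ℝ) < t2 := ht2
    have hzx := hpos x hx
    have hzy := hpos y hy
    have hzmem : a • x + b • y ∈ Ω := hΩconv hx hy ha hb hab
    have hS : 0 < a * h x + b * h y := convpos a b _ _ ha hb hab hzx hzy
    have hcon : a * h x + b * h y ≤ h (a • x + b • y) := by
      have := H.2 hx hy ha hb hab
      simpa [smul_eq_mul] using this
    have hfz : f (a • x + b • y) ≤ ((a * h x + b * h y)^2)⁻¹ := by
      have h1 : (a * h x + b * h y)^2 ≤ h (a • x + b • y) ^ 2 :=
        pow_le_pow_left₀ hS.le hcon 2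
      have h2 : f (a • x + b • y) = (h (a • x + b • y) ^ 2)⁻¹ := by
        rw [hsq _ hzmem, inv_inv]
      rw [h2]
      exact inv_anti₀ (by positivity) h1
    have hfx : f x = (h x ^ 2)⁻¹ := by rw [hsq x hx, inv_inv]
    have hfy : f y = (h y ^ 2)⁻¹ := by rw [hsq y hy, inv_inv]
    have hT : 0 ≤ a * t1 + b * t2 := by positivity
    simp only [Prod.smul_mk, Prod.mk_add_mk, smul_eq_mul]
    calc (a * t1 + b * t2) ^ 3 * f (a • x + b • y)
        ≤ (a * t1 + b * t2) ^ 3 * ((a * h x + b * h y)^2)⁻¹ := by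
          exact mul_le_mul_of_nonneg_left hfz (by positivity)
      _ = (a * t1 + b * t2) ^ 3 / (a * h x + b * h y)^2 := by rw [div_eq_mul_inv]
      _ ≤ a * (t1^3 / (h x)^2) + b * (t2^3 / (h y)^2) :=
          key_ineq a b t1 t2 (h x) (h y) ha hb hab ht1.le ht2.le hzx hzy
      _ = a * (t1 ^ 3 * f x) + b * (t2 ^ 3 * f y) := by
          rw [hfx, hfy, div_eq_mul_inv, div_eq_mul_inv]
end
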